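/- Suppose the eigenvalues λ₁ > ⋯ > λₙ of C = ∫ ∇g(γ)∇g(γ)ᵀ σ(γ) dγ are distinct, where γ = Wᵀ x for an orthogonal-column basis W of null(D) and g is the dimensionless physical relation. Then the matrix Z = W U (U the eigenvector matrix of C) is independent of the choice of orthogonal basis W: if W' = W Q for orthogonal Q, the construction applied to W' yields Z' = Z (up to scaling of individual columns by constants). -/

import Mathlib

open Matrix MeasureTheory

noncomputable def orthoEquiv {n : ℕ} (Q : Matrix (Fin n) (Fin n) ℝ) (hQ : Qᵀ * Q = 1) :
    EuclideanSpace ℝ (Fin n) ≃ₗᵢ[ℝ] EuclideanSpace ℝ (Fin n) where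
  toFun x := WithLp.toLp 2 (Q *ᵥ (x : Fin n → ℝ) : Fin n → ℝ)
  invFun x := WithLp.toLp 2 (Qᵀ *ᵥ (x : Fin n → ℝ) : Fin n → ℝ)
  map_add' x y := by
    show WithLp.toLp 2 (Q *ᵥ ((x : Fin n → ℝ) + y) : Fin n → ℝ) = _
    rw [Matrix.mulVec_add]
    rfl
  map_smul' c x := by
    show WithLp.toLp 2 (Q *ᵥ (c • (x : Fin n → ℝ)) : Fin n → ℝ) = _
    rw [Matrix.mulVec_smul]
    rfl
  left_inv x := by
    show WithLp.toLp 2 (Qᵀ *ᵥ (Q *ᵥ (x : Fin n → ℝ)) : Fin n → ℝ) = x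
    rw [Matrix.mulVec_mulVec, hQ, Matrix.one_mulVec]
  right_inv x := by
    show WithLp.toLp 2 (Q *ᵥ (Qᵀ *ᵥ (x : Fin n → ℝ)) : Fin n → ℝ) = x
    rw [Matrix.mulVec_mulVec, mul_eq_one_comm.mp hQ, Matrix.one_mulVec]
  norm_map' x := by
    have key : (Q *ᵥ (x : Fin n → ℝ)) ⬝ᵥ (Q *ᵥ (x : Fin n → ℝ)) = (x : Fin n → ℝ) ⬝ᵥ x := by
      rw [dotProduct_mulVec, ← Matrix.vecMul_transpose, Matrix.vecMul_vecMul, hQ,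
        Matrix.vecMul_one]
    have h1 : ∀ z : EuclideanSpace ℝ (Fin n), ‖z‖ = Real.sqrt ((z : Fin n → ℝ) ⬝ᵥ z) := by
      intro z
      rw [EuclideanSpace.norm_eq]
      congr 1
      simp [dotProduct, pow_two]
    rw [h1, h1]
    exact congrArg Real.sqrt key

lemma hasGradientAt_comp_isom {F : Type*} [NormedAddCommGroup F] [InnerProductSpace ℝ F]
    [CompleteSpace F] (e : F ≃ₗᵢ[ℝ] F) {g : F → ℝ} {G : F} {x : F}
    (h : HasGradientAt g G (e x)) : HasGradientAt (fun y => g (e y)) (e.symm G) x := by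
  rw [hasGradientAt_iff_hasFDerivAt] at h ⊢
  have he : HasFDerivAt e (e.toContinuousLinearEquiv : F →L[ℝ] F) x :=
    e.toContinuousLinearEquiv.hasFDerivAt
  have h2 := h.comp x he
  refine h2.congr_fderiv ?_
  ext v
  simp only [InnerProductSpace.toDual_apply_apply, ContinuousLinearMap.coe_comp', Function.comp_apply]
  rw [← LinearIsometryEquiv.inner_map_map e (e.symm G) v, e.apply_symm_apply]
  rfl

/-- core diagonalization relation: if `C *ᵥ v = μ • v` then the coordinates
`c = Uᵀ *ᵥ v` satisfy `lam j * c j = μ * c j` for all `j`. -/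
lemma eig_core {n : ℕ} (C U : Matrix (Fin n) (Fin n) ℝ) (hU : Uᵀ * U = 1)
    (lam : Fin n → ℝ)
    (heig : ∀ i : Fin n, C *ᵥ (fun j => U j i) = lam i • (fun j => U j i))
    (v : Fin n → ℝ) (μ : ℝ) (hCv : C *ᵥ v = μ • v) :
    ∀ j, lam j * (Uᵀ *ᵥ v) j = μ * (Uᵀ *ᵥ v) j := by
  have hUUT : U * Uᵀ = 1 := mul_eq_one_comm.mp hU
  have hCU : C * U = U * Matrix.diagonal lam := by
    ext j i
    have h1 : (C * U) j i = (C *ᵥ (fun t => U t i)) j := by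
      simp [Matrix.mul_apply, Matrix.mulVec, dotProduct]
    rw [h1, heig i]
    simp [Matrix.mul_diagonal, mul_comm]
  have hUC : Uᵀ * C = Matrix.diagonal lam * Uᵀ := by
    calc Uᵀ * C = Uᵀ * (C * (U * Uᵀ)) := by rw [hUUT, mul_one]
      _ = Uᵀ * ((C * U) * Uᵀ) := by rw [mul_assoc]
      _ = Uᵀ * ((U * Matrix.diagonal lam) * Uᵀ) := by rw [hCU]
      _ = (Uᵀ * U) * (Matrix.diagonal lam * Uᵀ) := by simp only [Matrix.mul_assoc]
      _ = Matrix.diagonal lam * Uᵀ := by rw [hU, one_mul]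
  intro j
  have h2 : Uᵀ *ᵥ (C *ᵥ v) = μ • (Uᵀ *ᵥ v) := by
    rw [hCv, Matrix.mulVec_smul]
  rw [Matrix.mulVec_mulVec, hUC, ← Matrix.mulVec_mulVec] at h2
  have h3 := congrFun h2 j
  rw [Matrix.mulVec_diagonal] at h3
  simpa using h3

lemma coords_ne_zero {n : ℕ} (U : Matrix (Fin n) (Fin n) ℝ) (hU : Uᵀ * U = 1)
    (v : Fin n → ℝ) (hv : v ≠ 0) : Uᵀ *ᵥ v ≠ 0 := by
  intro h
  apply hv
  have hUUT : U * Uᵀ = 1 := mul_eq_one_comm.mp hU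
  have : U *ᵥ (Uᵀ *ᵥ v) = v := by
    rw [Matrix.mulVec_mulVec, hUUT, Matrix.one_mulVec]
  rw [← this, h, Matrix.mulVec_zero]

/-- every eigenvalue of `C` is one of the `lam j`. -/
lemma eig_mem {n : ℕ} (C U : Matrix (Fin n) (Fin n) ℝ) (hU : Uᵀ * U = 1)
    (lam : Fin n → ℝ)
    (heig : ∀ i : Fin n, C *ᵥ (fun j => U j i) = lam i • (fun j => U j i))
    (v : Fin n → ℝ) (μ : ℝ) (hv : v ≠ 0) (hCv : C *ᵥ v = μ • v) :
    ∃ j, μ = lam j := by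
  have hcore := eig_core C U hU lam heig v μ hCv
  have hc0 := coords_ne_zero U hU v hv
  obtain ⟨j, hj⟩ := Function.ne_iff.mp hc0
  exact ⟨j, (mul_right_cancel₀ hj (hcore j)).symm⟩

/-- if the eigenvalues are pairwise distinct, the eigenvector for `lam i`
is a multiple of column `i` of `U`. -/
lemma eig_col {n : ℕ} (C U : Matrix (Fin n) (Fin n) ℝ) (hU : Uᵀ * U = 1)
    (lam : Fin n → ℝ) (hinj : Function.Injective lam)
    (heig : ∀ i : Fin n, C *ᵥ (fun j => U j i) = lam i • (fun j => U j i))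
    (v : Fin n → ℝ) (i : Fin n) (hv : v ≠ 0) (hCv : C *ᵥ v = lam i • v) :
    ∃ c : ℝ, c ≠ 0 ∧ v = c • (fun j => U j i) := by
  have hcore := eig_core C U hU lam heig v (lam i) hCv
  have hc0 := coords_ne_zero U hU v hv
  set c : Fin n → ℝ := Uᵀ *ᵥ v with hc
  have hzero : ∀ j, j ≠ i → c j = 0 := by
    intro j hji
    by_contra h
    exact hji (hinj (mul_right_cancel₀ h (hcore j)))
  have hci : c i ≠ 0 := by
    intro h
    apply hc0
    funext j
    by_cases hji : j = i
    · rw [hji]; exact h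
    · exact hzero j hji
  refine ⟨c i, hci, ?_⟩
  have hUUT : U * Uᵀ = 1 := mul_eq_one_comm.mp hU
  have hvU : v = U *ᵥ c := by
    rw [hc, Matrix.mulVec_mulVec, hUUT, Matrix.one_mulVec]
  rw [hvU]
  funext j
  simp only [Matrix.mulVec, dotProduct, Pi.smul_apply, smul_eq_mul]
  rw [Finset.sum_eq_single i]
  · ring
  · intro b _ hbi
    rw [hzero b hbi, mul_zero]
  · intro h; exact absurd (Finset.mem_univ i) h

/-- If the eigenvalues of C = ∫ ∇g ∇gᵀ σ dγ are distinct (strictly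
decreasing), then the matrix Z = W U defining the unique dimensionless groups is
independent of the choice of orthonormal basis W of null(D): replacing W by W' = W Q
(Q orthogonal), with the correspondingly transformed relation g'(γ') = g(Qγ'), density
σ'(γ') = σ(Qγ'), matrix C', and orthonormal eigenvector matrix U' (eigenvalues sorted
strictly decreasing), yields Z' = W' U' whose columns agree with those of Z = W U up
to scaling by nonzero constants. -/
theorem stmt15 (k m n : ℕ) (hkm : k < m) (hn : n = m - k)
    (D : Matrix (Fin k) (Fin m) ℝ) (hD : D.rank = k)
    (W : Matrix (Fin m) (Fin n) ℝ) (hWorth : Wᵀ * W = 1)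
    (hWnull : ∀ j : Fin n, D *ᵥ (fun i => W i j) = 0)
    (hWspan : Submodule.span ℝ (Set.range fun j : Fin n => (fun i => W i j : Fin m → ℝ))
      = LinearMap.ker D.mulVecLin)
    (Q : Matrix (Fin n) (Fin n) ℝ) (hQ : Qᵀ * Q = 1)
    (g : EuclideanSpace ℝ (Fin n) → ℝ) (hg : ContDiff ℝ 1 g)
    (Gg : EuclideanSpace ℝ (Fin n) → EuclideanSpace ℝ (Fin n))
    (hGg : ∀ γ, HasGradientAt g (Gg γ) γ)
    (σ : EuclideanSpace ℝ (Fin n) → ℝ)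
    (hσ0 : ∀ γ, 0 ≤ σ γ) (hσ1 : ∫ γ, σ γ = 1)
    (C : Matrix (Fin n) (Fin n) ℝ)
    (hC : ∀ i j, C i j = ∫ γ, Gg γ i * Gg γ j * σ γ)
    (hIntC : ∀ i j, Integrable (fun γ => Gg γ i * Gg γ j * σ γ))
    (U : Matrix (Fin n) (Fin n) ℝ) (hU : Uᵀ * U = 1)
    (lam : Fin n → ℝ) (hlam : StrictAnti lam)
    (heig : ∀ i : Fin n, C *ᵥ (fun j => U j i) = lam i • (fun j => U j i))
    (g' : EuclideanSpace ℝ (Fin n) → ℝ)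
    (hg' : ∀ γ' : EuclideanSpace ℝ (Fin n), g' γ' = g (WithLp.toLp 2 (Q *ᵥ γ' : Fin n → ℝ)))
    (Gg' : EuclideanSpace ℝ (Fin n) → EuclideanSpace ℝ (Fin n))
    (hGg' : ∀ γ', HasGradientAt g' (Gg' γ') γ')
    (C' : Matrix (Fin n) (Fin n) ℝ)
    (hC' : ∀ i j, C' i j = ∫ γ' : EuclideanSpace ℝ (Fin n),
      Gg' γ' i * Gg' γ' j * σ (WithLp.toLp 2 (Q *ᵥ γ' : Fin n → ℝ)))
    (hIntC' : ∀ i j, Integrable (fun γ' : EuclideanSpace ℝ (Fin n) =>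
      Gg' γ' i * Gg' γ' j * σ (WithLp.toLp 2 (Q *ᵥ γ' : Fin n → ℝ))))
    (U' : Matrix (Fin n) (Fin n) ℝ) (hU' : U'ᵀ * U' = 1)
    (lam' : Fin n → ℝ) (hlam' : StrictAnti lam')
    (heig' : ∀ i : Fin n, C' *ᵥ (fun j => U' j i) = lam' i • (fun j => U' j i)) :
    ∀ i : Fin n, ∃ c : ℝ, c ≠ 0 ∧
      (fun j => (W * Q * U') j i : Fin m → ℝ) = c • (fun j => (W * U) j i) := by
  have hQQT : Q * Qᵀ = 1 := mul_eq_one_comm.mp hQ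
  set e := orthoEquiv Q hQ with he
  -- Step 1: gradient transformation
  have hGrad : ∀ γ' : EuclideanSpace ℝ (Fin n),
      (Gg' γ' : Fin n → ℝ) = Qᵀ *ᵥ (Gg (e γ') : Fin n → ℝ) := by
    intro γ'
    have hgeq : g' = fun y => g (e y) := funext fun y => hg' y
    have h1 : HasGradientAt g' (e.symm (Gg (e γ'))) γ' := by
      rw [hgeq]
      exact hasGradientAt_comp_isom e (hGg (e γ'))
    have h2 := (hGg' γ').unique h1
    rw [h2]
    rfl
  -- Step 2: C' = Qᵀ C Q
  have hemb : MeasurableEmbedding e :=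
    e.toHomeomorph.toMeasurableEquiv.measurableEmbedding
  have hCQ : C' = Qᵀ * C * Q := by
    ext i j
    rw [hC' i j]
    have key : (∫ γ' : EuclideanSpace ℝ (Fin n),
        Gg' γ' i * Gg' γ' j * σ (WithLp.toLp 2 (Q *ᵥ γ' : Fin n → ℝ)))
        = ∫ γ : EuclideanSpace ℝ (Fin n),
          (Qᵀ *ᵥ (Gg γ : Fin n → ℝ)) i * (Qᵀ *ᵥ (Gg γ : Fin n → ℝ)) j * σ γ := by
      rw [← e.measurePreserving.integral_comp hemb
        (fun γ => (Qᵀ *ᵥ (Gg γ : Fin n → ℝ)) i * (Qᵀ *ᵥ (Gg γ : Fin n → ℝ)) j * σ γ)]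
      congr 1
      funext γ'
      rw [hGrad γ']
      rfl
    rw [key]
    have expand : ∀ γ : EuclideanSpace ℝ (Fin n),
        (Qᵀ *ᵥ (Gg γ : Fin n → ℝ)) i * (Qᵀ *ᵥ (Gg γ : Fin n → ℝ)) j * σ γ
        = ∑ a, ∑ b, Q a i * Q b j * (Gg γ a * Gg γ b * σ γ) := by
      intro γ
      simp only [Matrix.mulVec, dotProduct, Matrix.transpose_apply]
      rw [Finset.sum_mul_sum, Finset.sum_mul]
      refine Finset.sum_congr rfl fun a _ => ?_
      rw [Finset.sum_mul]
      exact Finset.sum_congr rfl fun b _ => by ring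
    simp only [expand]
    rw [integral_finset_sum _ (fun a _ => integrable_finset_sum _
      (fun b _ => ((hIntC a b).const_mul (Q a i * Q b j))))]
    have : ∀ a, (∫ γ : EuclideanSpace ℝ (Fin n), ∑ b, Q a i * Q b j * (Gg γ a * Gg γ b * σ γ))
        = ∑ b, Q a i * Q b j * C a b := by
      intro a
      rw [integral_finset_sum _ (fun b _ => ((hIntC a b).const_mul (Q a i * Q b j)))]
      refine Finset.sum_congr rfl fun b _ => ?_
      rw [hC a b]
      exact integral_const_mul _ _
    simp only [this]
    simp only [Matrix.mul_apply, Matrix.transpose_apply, Finset.sum_mul]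
    rw [Finset.sum_comm]
    refine Finset.sum_congr rfl fun a _ => Finset.sum_congr rfl fun b _ => by ring
  -- columns of U, U' are nonzero
  have hUcol : ∀ (V : Matrix (Fin n) (Fin n) ℝ), Vᵀ * V = 1 →
      ∀ i : Fin n, (fun j => V j i : Fin n → ℝ) ≠ 0 := by
    intro V hV i h
    have h1 : (Vᵀ * V) i i = 1 := by rw [hV]; simp
    rw [Matrix.mul_apply] at h1
    have : ∀ t, Vᵀ i t * V t i = 0 := by
      intro t
      have := congrFun h t
      simp only [Pi.zero_apply] at this
      simp [Matrix.transpose_apply, this]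
    rw [Finset.sum_congr rfl fun t _ => this t] at h1
    simp at h1
  -- transported eigenvectors
  have hQU' : ∀ i : Fin n, C *ᵥ (Q *ᵥ (fun j => U' j i)) = lam' i • (Q *ᵥ (fun j => U' j i)) := by
    intro i
    have h1 : C * Q = Q * C' := by
      rw [hCQ]
      calc C * Q = 1 * (C * Q) := by rw [Matrix.one_mul]
        _ = (Q * Qᵀ) * (C * Q) := by rw [hQQT]
        _ = Q * (Qᵀ * C * Q) := by simp only [Matrix.mul_assoc]
    rw [Matrix.mulVec_mulVec, h1, ← Matrix.mulVec_mulVec, heig' i, Matrix.mulVec_smul]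
  have hQTU : ∀ i : Fin n, C' *ᵥ (Qᵀ *ᵥ (fun j => U j i)) = lam i • (Qᵀ *ᵥ (fun j => U j i)) := by
    intro i
    have h1 : C' * Qᵀ = Qᵀ * C := by
      rw [hCQ]
      simp only [Matrix.mul_assoc, hQQT, Matrix.mul_one]
    rw [Matrix.mulVec_mulVec, h1, ← Matrix.mulVec_mulVec, heig i, Matrix.mulVec_smul]
  have hQne : ∀ v : Fin n → ℝ, v ≠ 0 → Q *ᵥ v ≠ 0 := by
    intro v hv h
    apply hv
    have : Qᵀ *ᵥ (Q *ᵥ v) = v := by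
      rw [Matrix.mulVec_mulVec, hQ, Matrix.one_mulVec]
    rw [← this, h, Matrix.mulVec_zero]
  have hQTne : ∀ v : Fin n → ℝ, v ≠ 0 → Qᵀ *ᵥ v ≠ 0 := by
    intro v hv h
    apply hv
    have : Q *ᵥ (Qᵀ *ᵥ v) = v := by
      rw [Matrix.mulVec_mulVec, hQQT, Matrix.one_mulVec]
    rw [← this, h, Matrix.mulVec_zero]
  -- Step 3: lam = lam'
  have hrange : Set.range lam = Set.range lam' := by
    apply Set.Subset.antisymm
    · rintro x ⟨i, rfl⟩
      obtain ⟨j, hj⟩ := eig_mem C' U' hU' lam' heig' (Qᵀ *ᵥ (fun j => U j i)) (lam i)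
        (hQTne _ (hUcol U hU i)) (hQTU i)
      exact ⟨j, hj.symm⟩
    · rintro x ⟨i, rfl⟩
      obtain ⟨j, hj⟩ := eig_mem C U hU lam heig (Q *ᵥ (fun j => U' j i)) (lam' i)
        (hQne _ (hUcol U' hU' i)) (hQU' i)
      exact ⟨j, hj.symm⟩
  have hlameq : lam = lam' := by
    have hf : StrictMono (fun i => OrderDual.toDual (lam i)) := fun a b h => hlam h
    have hg2 : StrictMono (fun i => OrderDual.toDual (lam' i)) := fun a b h => hlam' h
    have hr : Set.range (fun i => OrderDual.toDual (lam i))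
        = Set.range (fun i => OrderDual.toDual (lam' i)) := by
      rw [show (fun i => OrderDual.toDual (lam i)) = OrderDual.toDual ∘ lam from rfl,
        show (fun i => OrderDual.toDual (lam' i)) = OrderDual.toDual ∘ lam' from rfl,
        Set.range_comp, Set.range_comp, hrange]
    have hwf : WellFoundedLT (Fin n) := inferInstance
    have h2 := (@StrictMono.range_inj (Fin n) ℝᵒᵈ _ _ hwf _ _ hf hg2).mp hr
    funext i
    exact OrderDual.toDual.injective (congrFun h2 i)
  -- Step 4: conclude
  intro i
  have hCv : C *ᵥ (Q *ᵥ (fun j => U' j i)) = lam i • (Q *ᵥ (fun j => U' j i)) := by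
    rw [hlameq]; exact hQU' i
  obtain ⟨c, hc, hvc⟩ := eig_col C U hU lam hlam.injective heig (Q *ᵥ (fun j => U' j i)) i
    (hQne _ (hUcol U' hU' i)) hCv
  refine ⟨c, hc, ?_⟩
  funext j
  have hQUcol : ∀ t, (Q * U') t i = (Q *ᵥ (fun s => U' s i)) t := by
    intro t; simp [Matrix.mul_apply, Matrix.mulVec, dotProduct]
  calc (W * Q * U') j i = ∑ t, W j t * (Q * U') t i := by
        rw [Matrix.mul_assoc, Matrix.mul_apply]
    _ = ∑ t, W j t * (Q *ᵥ (fun s => U' s i)) t := by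
        exact Finset.sum_congr rfl fun t _ => by rw [hQUcol t]
    _ = ∑ t, W j t * (c • (fun s => U s i)) t := by rw [hvc]
    _ = c * ∑ t, W j t * U t i := by
        rw [Finset.mul_sum]
        exact Finset.sum_congr rfl fun t _ => by
          simp [Pi.smul_apply, smul_eq_mul]; ring
    _ = c * (W * U) j i := by rw [Matrix.mul_apply]
    _ = (c • (fun j => (W * U) j i)) j := rfl
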